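/- For γ > 0, a < 0, Ω > 0, if γ sinh(Ωπ) < -5aΩ²π, then the quadratic equation ã x² + b̃ x + c̃ = 0 with ã = M₁₂²M₂₂², b̃ = -2M₁₁M₂₂M₁₂M₂₁, c̃ = M₂₁²M₁₂² + M₁₁²M₂₂² - M₁₂²M₂₂² (where M₁₁ = -6γ/(5a²), M₂₁ = 6γ/(5a²), M₁₂ = M₂₂ = -6πΩ²/(a sinh Ωπ)) has a real root x with |x| < 1, and consequently the equation cos(Ωη) = x has infinitely many solutions η with sin(Ωη) ≠ 0. -/

import Mathlib

open Real

theorem melnikov_quadratic_root_exists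
    (a γ Ω M₁₁ M₂₁ M₁₂ M₂₂ aQ bQ cQ : ℝ)
    (hγ : 0 < γ) (ha : a < 0) (hΩ : 0 < Ω)
    (hcond : γ * Real.sinh (Ω * π) < -5 * a * Ω^2 * π)
    (hM₁₁ : M₁₁ = -6 * γ / (5 * a^2))
    (hM₂₁ : M₂₁ = 6 * γ / (5 * a^2))
    (hM₁₂ : M₁₂ = -6 * π * Ω^2 / (a * Real.sinh (Ω * π)))
    (hM₂₂ : M₂₂ = -6 * π * Ω^2 / (a * Real.sinh (Ω * π)))
    (haQ : aQ = M₁₂^2 * M₂₂^2)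
    (hbQ : bQ = -2 * M₁₁ * M₂₂ * M₁₂ * M₂₁)
    (hcQ : cQ = M₂₁^2 * M₁₂^2 + M₁₁^2 * M₂₂^2 - M₁₂^2 * M₂₂^2) :
    ∃ x : ℝ, aQ * x^2 + bQ * x + cQ = 0 ∧ |x| < 1 ∧
      {η : ℝ | Real.cos (Ω * η) = x ∧ Real.sin (Ω * η) ≠ 0}.Infinite := by
  have hs : 0 < Real.sinh (Ω * π) := Real.sinh_pos_iff.2 (by positivity)
  set s := Real.sinh (Ω * π) with hsdef
  set k : ℝ := 6 * γ / (5 * a ^ 2) with hk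
  set p : ℝ := -6 * π * Ω ^ 2 / (a * s) with hp
  have ha2 : (0:ℝ) < a ^ 2 := by nlinarith
  have hπ : (0:ℝ) < π := Real.pi_pos
  have hkpos : 0 < k := div_pos (by linarith) (by nlinarith)
  have has : a * s < 0 := mul_neg_of_neg_of_pos ha hs
  have hasne : a * s ≠ 0 := ne_of_lt has
  have hppos : 0 < p := by
    rw [hp]
    apply div_pos_of_neg_of_neg _ has
    nlinarith
  have e1 : k * (5 * a ^ 2) = 6 * γ := by rw [hk]; field_simp; exact div_self ha.ne
  have e2 : p * (a * s) = -6 * π * Ω ^ 2 := by rw [hp]; field_simp; rw [div_self ha.ne]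
  have hkp : k < p := by nlinarith [mul_pos ha2 hs]
  have hk2p2 : k ^ 2 < p ^ 2 := by nlinarith
  have hk2 : 0 < k ^ 2 := by positivity
  have hM11 : M₁₁ = -k := by rw [hM₁₁, hk]; ring
  have hM21 : M₂₁ = k := by rw [hM₂₁, hk]
  have hM12 : M₁₂ = p := by rw [hM₁₂, hp]
  have hM22 : M₂₂ = p := by rw [hM₂₂, hp]
  refine ⟨(p ^ 2 - 2 * k ^ 2) / p ^ 2, ?_, ?_, ?_⟩
  · rw [haQ, hbQ, hcQ, hM11, hM21, hM12, hM22]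
    field_simp
    ring
  · rw [abs_lt]
    constructor
    · rw [lt_div_iff₀ (by positivity)]; linarith
    · rw [div_lt_one (by positivity)]; linarith
  · set x : ℝ := (p ^ 2 - 2 * k ^ 2) / p ^ 2 with hx
    have hxlt : |x| < 1 := by
      rw [abs_lt]
      constructor
      · rw [hx, lt_div_iff₀ (by positivity)]; linarith
      · rw [hx, div_lt_one (by positivity)]; linarith
    have hx1 : x ≤ 1 := le_of_lt (abs_lt.1 hxlt).2
    have hx2 : -1 ≤ x := le_of_lt (abs_lt.1 hxlt).1
    have hlt := abs_lt.1 hxlt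
    clear_value x s k p
    clear hcond hM₁₁ hM₂₁ hM₁₂ hM₂₂ haQ hbQ hcQ hx hk hp hsdef e1 e2
    have hx2pos : 0 < 1 - x ^ 2 := by
      have h1 : 0 < 1 - x := by linarith [hlt.2]
      have h2 : 0 < 1 + x := by linarith [hlt.1]
      have h3 := mul_pos h1 h2
      have h4 : (1 - x) * (1 + x) = 1 - x ^ 2 := by ring
      linarith
    have hsin : Real.sin (Real.arccos x) ≠ 0 := by
      rw [Real.sin_arccos]
      exact (Real.sqrt_pos.2 hx2pos).ne'
    apply Set.infinite_of_injective_forall_mem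
      (f := fun n : ℕ => (Real.arccos x + n * (2 * π)) / Ω)
    · intro m n h
      simp only at h
      have h1 : Real.arccos x + (m:ℝ) * (2 * π) = Real.arccos x + (n:ℝ) * (2 * π) := by
        have h0 := congrArg (fun y : ℝ => y * Ω) h
        simpa [div_mul_cancel₀, hΩ.ne'] using h0
      have h2 : (m : ℝ) * (2 * π) = (n : ℝ) * (2 * π) := by linarith
      have h3 : (m : ℝ) = (n : ℝ) := mul_right_cancel₀ (by positivity) h2
      exact_mod_cast h3
    · intro n
      have hmul : Ω * ((Real.arccos x + n * (2 * π)) / Ω) =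
          Real.arccos x + n * (2 * π) := mul_div_cancel₀ _ hΩ.ne'
      constructor
      · rw [hmul, Real.cos_add_nat_mul_two_pi, Real.cos_arccos hx2 hx1]
      · rw [hmul, Real.sin_add_nat_mul_two_pi]
        exact hsin
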